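/- Let Ω, Δ, Σ be finite sets with |Ω| ≥ 2, |Δ| ≥ 2, and let Γ : Δ → P(Σ) assign pairwise disjoint r-element subsets of Σ with r ≥ 2. For each (ω, ε) ∈ Ω × Δ, let Γ̂(ω, ε) be the set of functions f : Σ → Ω that are constant equal to ω on Γ(ε) and are non-constant on Γ(δ) for every δ ≠ ε. Then the sets Γ̂(ω, ε) are pairwise disjoint, nonempty, and each has cardinality |Ω|^{|Σ| - r|Δ|} · (|Ω|^r - |Ω|)^{|Δ| - 1}. -/

import Mathlib

open Classical in
lemma aux_card_const {α β : Type*} [Finite α] [Finite β] [Nonempty α] :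
    Nat.card {g : α → β // ∀ x y, g x = g y} = Nat.card β := by
  obtain ⟨x₀⟩ := ‹Nonempty α›
  exact Nat.card_congr
    ⟨fun g => g.1 x₀, fun b => ⟨fun _ => b, fun _ _ => rfl⟩,
     fun g => Subtype.ext (funext fun x => (g.2 x x₀).symm), fun b => rfl⟩

lemma aux_card_nonconst {α β : Type*} [Finite α] [Finite β] [Nonempty α] :
    Nat.card {g : α → β // ∃ x y, g x ≠ g y} =
      Nat.card β ^ Nat.card α - Nat.card β := by
  classical
  have h1 : Nat.card {g : α → β // ∃ x y, g x ≠ g y} =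
      Nat.card {g : α → β // ¬ ∀ x y, g x = g y} :=
    Nat.card_congr (Equiv.subtypeEquivRight (fun g => by push_neg; rfl))
  have h2 : Nat.card {g : α → β // ∀ x y, g x = g y} +
      Nat.card {g : α → β // ¬ ∀ x y, g x = g y} = Nat.card (α → β) := by
    rw [← Nat.card_sum]
    exact Nat.card_congr (Equiv.sumCompl _)
  have h3 : Nat.card (α → β) = Nat.card β ^ Nat.card α := Nat.card_fun
  rw [aux_card_const, h3] at h2
  rw [h1]
  exact Nat.eq_sub_of_add_eq' h2

lemma aux_card_eq_const {α β : Type*} [Finite α] [Finite β] (b : β) :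
    Nat.card {g : α → β // ∀ x, g x = b} = 1 := by
  have : Unique {g : α → β // ∀ x, g x = b} :=
    ⟨⟨⟨fun _ => b, fun _ => rfl⟩⟩, by
      rintro ⟨g, hg⟩; exact Subtype.ext (funext fun x => hg x)⟩
  exact Nat.card_unique

lemma aux_count {Sg Om De : Type*} [Fintype Sg] [Fintype Om] [Fintype De]
    [DecidableEq Sg] [DecidableEq De]
    (Γ : De → Finset Sg)
    (hdisj : ∀ δ δ' : De, δ ≠ δ' → Disjoint (Γ δ) (Γ δ'))
    (P : ∀ δ : De, ({x : Sg // x ∈ Γ δ} → Om) → Prop) :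
    Nat.card {f : Sg → Om // ∀ δ, P δ (fun x => f x.1)} =
      Nat.card ({σ : Sg // σ ∉ Finset.univ.biUnion Γ} → Om) *
        ∏ δ : De, Nat.card {g : {x : Sg // x ∈ Γ δ} → Om // P δ g} := by
  classical
  set T : Finset Sg := Finset.univ.biUnion Γ with hT
  have hmemT : ∀ {σ : Sg} {δ : De}, σ ∈ Γ δ → σ ∈ T := fun {σ δ} h =>
    Finset.mem_biUnion.mpr ⟨δ, Finset.mem_univ _, h⟩
  have huniq : ∀ σ : Sg, σ ∈ T → ∃! δ, σ ∈ Γ δ := by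
    intro σ hσ
    obtain ⟨δ, -, hδ⟩ := Finset.mem_biUnion.mp hσ
    refine ⟨δ, hδ, fun δ' hδ' => ?_⟩
    by_contra hne
    exact absurd hδ (Finset.disjoint_left.mp (hdisj δ' δ hne) hδ')
  choose idx hmem huq using huniq
  have idx_eq : ∀ (σ : Sg) (hσ : σ ∈ T) (δ : De), σ ∈ Γ δ → idx σ hσ = δ :=
    fun σ hσ δ h => (huq σ hσ δ h).symm
  -- the reconstruction map
  set F : (({σ : Sg // σ ∉ T} → Om) ×
      (∀ δ : De, {g : {x : Sg // x ∈ Γ δ} → Om // P δ g})) → Sg → Om :=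
    fun q σ => if hσ : σ ∈ T then (q.2 (idx σ hσ)).1 ⟨σ, hmem σ hσ⟩
      else q.1 ⟨σ, hσ⟩ with hF
  have hval : ∀ q (σ : Sg) (δ : De) (hδ : σ ∈ Γ δ), F q σ = (q.2 δ).1 ⟨σ, hδ⟩ := by
    intro q σ δ hδ
    have hσ : σ ∈ T := hmemT hδ
    rw [hF]
    simp only
    rw [dif_pos hσ]
    have h := idx_eq σ hσ δ hδ
    subst h
    rfl
  rw [← Nat.card_pi, ← Nat.card_prod]
  refine Nat.card_congr ⟨fun f => (fun σ => f.1 σ.1, fun δ => ⟨fun x => f.1 x.1, f.2 δ⟩),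
    fun q => ⟨F q, fun δ => ?_⟩, fun f => ?_, fun q => ?_⟩
  · have h : (fun x : {x : Sg // x ∈ Γ δ} => F q x.1) = (q.2 δ).1 :=
      funext fun x => hval q x.1 δ x.2
    rw [h]
    exact (q.2 δ).2
  · refine Subtype.ext (funext fun σ => ?_)
    show F _ σ = f.1 σ
    by_cases hσ : σ ∈ T
    · rw [hF]; simp only; rw [dif_pos hσ]
    · rw [hF]; simp only; rw [dif_neg hσ]
  · refine Prod.ext (funext fun σ => ?_) (funext fun δ => ?_)
    · show F q σ.1 = q.1 σ
      rw [hF]; simp only; rw [dif_neg σ.2]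
    · refine Subtype.ext (funext fun x => ?_)
      show F q x.1 = (q.2 δ).1 x
      exact hval q x.1 δ x.2

theorem Gammahat_disjoint_nonempty_card
    (Sg Om De : Type*) [Fintype Sg] [Fintype Om] [Fintype De]
    [DecidableEq Sg] [DecidableEq Om] [DecidableEq De]
    (r : ℕ) (hr : 2 ≤ r)
    (Γ : De → Finset Sg)
    (hdisj : ∀ δ δ' : De, δ ≠ δ' → Disjoint (Γ δ) (Γ δ'))
    (hcard : ∀ δ, (Γ δ).card = r)
    (hOm : 2 ≤ Fintype.card Om) (hDe : 2 ≤ Fintype.card De)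
    (Γhat : Om × De → Set (Sg → Om))
    (hΓhat : ∀ p, Γhat p = {f : Sg → Om |
      (∀ σ ∈ Γ p.2, f σ = p.1) ∧
      ∀ δ : De, δ ≠ p.2 → ∃ σ₁ ∈ Γ δ, ∃ σ₂ ∈ Γ δ, f σ₁ ≠ f σ₂}) :
    (∀ p q : Om × De, p ≠ q → Disjoint (Γhat p) (Γhat q)) ∧
    (∀ p, (Γhat p).Nonempty) ∧
    (∀ p, (Γhat p).ncard =
      Fintype.card Om ^ (Fintype.card Sg - r * Fintype.card De) *
        (Fintype.card Om ^ r - Fintype.card Om) ^ (Fintype.card De - 1)) := by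
  classical
  have hΓne : ∀ δ, (Γ δ).Nonempty := fun δ =>
    Finset.card_pos.mp (by rw [hcard]; omega)
  have hΓcard : ∀ δ, Nat.card {x : Sg // x ∈ Γ δ} = r := fun δ => by
    rw [Nat.card_eq_fintype_card, Fintype.card_coe, hcard]
  have hΓnonempty : ∀ δ, Nonempty {x : Sg // x ∈ Γ δ} := fun δ => by
    obtain ⟨x, hx⟩ := hΓne δ; exact ⟨⟨x, hx⟩⟩
  -- cardinality
  have key : ∀ p : Om × De, (Γhat p).ncard =
      Fintype.card Om ^ (Fintype.card Sg - r * Fintype.card De) *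
        (Fintype.card Om ^ r - Fintype.card Om) ^ (Fintype.card De - 1) := by
    rintro ⟨ω, ε⟩
    rw [hΓhat]
    rw [← Nat.card_coe_set_eq]
    have e1 : Nat.card {f : Sg → Om |
        (∀ σ ∈ Γ (ω, ε).2, f σ = (ω, ε).1) ∧
        ∀ δ : De, δ ≠ (ω, ε).2 → ∃ σ₁ ∈ Γ δ, ∃ σ₂ ∈ Γ δ, f σ₁ ≠ f σ₂} =
        Nat.card {f : Sg → Om // ∀ δ : De,
          (if δ = ε then ∀ x : {x : Sg // x ∈ Γ δ}, f x.1 = ω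
            else ∃ x y : {x : Sg // x ∈ Γ δ}, f x.1 ≠ f y.1)} := by
      refine Nat.card_congr (Equiv.subtypeEquivRight fun f => ?_)
      simp only [Set.mem_setOf_eq]
      constructor
      · rintro ⟨h1, h2⟩ δ
        by_cases hδ : δ = ε
        · subst hδ; rw [if_pos rfl]; exact fun x => h1 x.1 x.2
        · rw [if_neg hδ]
          obtain ⟨σ₁, m₁, σ₂, m₂, hne⟩ := h2 δ hδ
          exact ⟨⟨σ₁, m₁⟩, ⟨σ₂, m₂⟩, hne⟩
      · intro h
        constructor
        · have := h ε; rw [if_pos rfl] at this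
          exact fun σ hσ => this ⟨σ, hσ⟩
        · intro δ hδ
          have := h δ; rw [if_neg hδ] at this
          obtain ⟨x, y, hxy⟩ := this
          exact ⟨x.1, x.2, y.1, y.2, hxy⟩
    rw [e1]
    rw [aux_count Γ hdisj (fun δ g =>
      if δ = ε then ∀ x, g x = ω else ∃ x y, g x ≠ g y)]
    have hT : (Finset.univ.biUnion Γ).card = r * Fintype.card De := by
      rw [Finset.card_biUnion (fun x _ y _ h => hdisj x y h)]
      simp only [hcard, Finset.sum_const, Finset.card_univ, smul_eq_mul]
      ring
    have hfree : Nat.card ({σ : Sg // σ ∉ Finset.univ.biUnion Γ} → Om) =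
        Fintype.card Om ^ (Fintype.card Sg - r * Fintype.card De) := by
      rw [Nat.card_fun, Nat.card_eq_fintype_card, Nat.card_eq_fintype_card,
        Fintype.card_subtype_compl, Fintype.card_coe, hT]
    have hprod : (∏ δ : De, Nat.card {g : {x : Sg // x ∈ Γ δ} → Om //
          if δ = ε then ∀ x, g x = ω else ∃ x y, g x ≠ g y}) =
        (Fintype.card Om ^ r - Fintype.card Om) ^ (Fintype.card De - 1) := by
      rw [← Finset.prod_erase_mul _ _ (Finset.mem_univ ε)]
      have hε : Nat.card {g : {x : Sg // x ∈ Γ ε} → Om //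
          if ε = ε then ∀ x, g x = ω else ∃ x y, g x ≠ g y} = 1 := by
        rw [Nat.card_congr (Equiv.subtypeEquivRight fun g => by rw [if_pos rfl])]
        exact aux_card_eq_const ω
      rw [hε, mul_one]
      rw [Finset.prod_congr rfl (fun δ hδ => ?_), Finset.prod_const,
        Finset.card_erase_of_mem (Finset.mem_univ ε), Finset.card_univ]
      have hδε : δ ≠ ε := Finset.ne_of_mem_erase hδ
      haveI := hΓnonempty δ
      rw [Nat.card_congr (Equiv.subtypeEquivRight fun g => by rw [if_neg hδε])]
      rw [aux_card_nonconst, hΓcard, Nat.card_eq_fintype_card]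
    rw [hfree, hprod]
  -- positivity
  have hpos : 0 < Fintype.card Om ^ (Fintype.card Sg - r * Fintype.card De) *
      (Fintype.card Om ^ r - Fintype.card Om) ^ (Fintype.card De - 1) := by
    have h1 : Fintype.card Om < Fintype.card Om ^ r := by
      calc Fintype.card Om = Fintype.card Om * 1 := (mul_one _).symm
        _ < Fintype.card Om * Fintype.card Om := by nlinarith
        _ = Fintype.card Om ^ 2 := (sq _).symm
        _ ≤ Fintype.card Om ^ r := Nat.pow_le_pow_right (by omega) hr
    exact Nat.mul_pos (pow_pos (by omega) _) (pow_pos (by omega) _)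
  refine ⟨?_, ?_, key⟩
  · rintro ⟨ω, ε⟩ ⟨ω', ε'⟩ hpq
    rw [Set.disjoint_left]
    intro f hf hg
    rw [hΓhat] at hf hg
    obtain ⟨hf1, hf2⟩ := hf
    obtain ⟨hg1, hg2⟩ := hg
    by_cases h2 : ε = ε'
    · subst h2
      have h1 : ω ≠ ω' := fun h => hpq (by simp [h])
      obtain ⟨σ, hσ⟩ := hΓne ε
      exact h1 ((hf1 σ hσ).symm.trans (hg1 σ hσ))
    · obtain ⟨σ₁, m₁, σ₂, m₂, hne⟩ := hg2 ε h2
      exact hne ((hf1 σ₁ m₁).trans (hf1 σ₂ m₂).symm)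
  · intro p
    apply Set.nonempty_of_ncard_ne_zero
    rw [key p]
    omega
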